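/- Let G be a group acting on a set M, let x ∈ M, let K : G → M → ℝ be a one-cocycle modulo constants, and let F : M → ℝ. Define K' g z := K g z + F (g • z) − F z (the change of K corresponding to replacing the primitive λ by λ + dF). Then K' is again a one-cocycle modulo constants, and the two-cocycles 𝔊'_x(g,h) := K' g (h • x) − K' g x and 𝔊_x(g,h) := K g (h • x) − K g x differ by a coboundary: there exists b : G → ℝ (one may take b g := F x − F (g • x)) such that 𝔊'_x(g,h) − 𝔊_x(g,h) = b g + b h − b (g*h) for all g, h ∈ G. (Hence the cohomology class of the Ismagilov–Losik–Michor cocycle does not depend on the choice of primitive.) -/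
import Mathlib

/-- Changing the one-cocycle `K` by `K' g z := K g z + F (g • z) − F z` (the change
corresponding to replacing the primitive `λ` by `λ + dF`) yields again a one-cocycle
modulo constants, and the associated two-cocycles `𝔊'_x` and `𝔊_x` differ by a
coboundary; hence the class of the Ismagilov–Losik–Michor cocycle does not depend
on the choice of primitive. -/
theorem ILM_class_independent_of_primitive {G M : Type*} [Group G] [MulAction G M]
    (x : M) (K : G → M → ℝ)
    (hK : ∀ g h : G, ∃ c : ℝ, ∀ y : M, K (g * h) y = K g (h • y) + K h y + c)
    (F : M → ℝ) (K' : G → M → ℝ)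
    (hK' : ∀ (g : G) (z : M), K' g z = K g z + F (g • z) - F z) :
    (∀ g h : G, ∃ c : ℝ, ∀ y : M, K' (g * h) y = K' g (h • y) + K' h y + c) ∧
      ∃ b : G → ℝ, ∀ g h : G,
        (K' g (h • x) - K' g x) - (K g (h • x) - K g x) = b g + b h - b (g * h) := by
  constructor
  · intro g h
    obtain ⟨c, hc⟩ := hK g h
    exact ⟨c, fun y => by simp only [hK', hc y, mul_smul]; ring⟩
  · exact ⟨fun g => F x - F (g • x), fun g h => by
      simp only [hK', mul_smul]; ring⟩
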